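/- Let $g_r \in \mathbb{Z}_2[w_2,w_3,w_4]$ satisfy $g_0=1$, $g_{-1}=g_{-2}=g_{-3}=0$, $g_r = w_2 g_{r-2} + w_3 g_{r-3} + w_4 g_{r-4}$ for $r\geq 1$. Then with respect to the lexicographic monomial ordering with $w_3 < w_2 < w_4$, the leading monomial of $g_{2^t}$ is $w_4^{2^{t-2}}$ for every $t\geq 2$. -/
import Mathlib


open MvPolynomial

private lemma weight_lemma (g : ℤ → MvPolynomial (Fin 3) (ZMod 2))
    (hneg : ∀ r : ℤ, -3 ≤ r → r < 0 → g r = 0)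
    (h0 : g 0 = 1)
    (hrec : ∀ r : ℤ, 1 ≤ r →
      g r = X 0 * g (r - 2) + X 1 * g (r - 3) + X 2 * g (r - 4)) :
    ∀ n : ℕ, ∀ m : ℤ, -3 ≤ m → m + 3 = n →
      ∀ d ∈ (g m).support, 2 * (d 0 : ℤ) + 3 * (d 1 : ℤ) + 4 * (d 2 : ℤ) = m := by
  intro n
  induction n using Nat.strong_induction_on with
  | _ n ih =>
    intro m hm hmn d hd
    rcases lt_trichotomy m 0 with hlt | heq | hgt
    · rw [hneg m hm hlt] at hd; simp at hd
    · subst heq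
      rw [h0, MvPolynomial.mem_support_iff, MvPolynomial.coeff_one] at hd
      by_cases h : 0 = d
      · simp [← h]
      · simp [h] at hd
    · rw [hrec m hgt] at hd
      have hd' : d ∈ (X (R := ZMod 2) 0 * g (m - 2)).support ∪
          (X (R := ZMod 2) 1 * g (m - 3)).support ∪
          (X (R := ZMod 2) 2 * g (m - 4)).support := by
        refine Finset.mem_of_subset ?_ hd
        refine (MvPolynomial.support_add).trans ?_
        exact Finset.union_subset_union MvPolynomial.support_add le_rfl
      simp only [Finset.mem_union] at hd'
      have key : ∀ (i : Fin 3) (k : ℤ), 2 ≤ k → k ≤ 4 →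
          d ∈ (X (R := ZMod 2) i * g (m - k)).support →
          2 * (d 0 : ℤ) + 3 * (d 1 : ℤ) + 4 * (d 2 : ℤ)
            = 2 * ((Finsupp.single i 1 : Fin 3 →₀ ℕ) 0 : ℤ)
              + 3 * ((Finsupp.single i 1 : Fin 3 →₀ ℕ) 1 : ℤ)
              + 4 * ((Finsupp.single i 1 : Fin 3 →₀ ℕ) 2 : ℤ) + (m - k) := by
        intro i k hk2 hk4 hdi
        rw [MvPolynomial.support_X_mul, Finset.mem_map] at hdi
        obtain ⟨e, he, rfl⟩ := hdi
        have hkm : -3 ≤ m - k := by omega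
        have := ih (m - k + 3).toNat (by omega) (m - k) hkm (by omega) e he
        simp only [addLeftEmbedding_apply, Finsupp.add_apply]
        push_cast
        linarith [this]
      have e01 : (0:Fin 3) ≠ 1 := by decide
      have e02 : (0:Fin 3) ≠ 2 := by decide
      have e10 : (1:Fin 3) ≠ 0 := by decide
      have e12 : (1:Fin 3) ≠ 2 := by decide
      have e20 : (2:Fin 3) ≠ 0 := by decide
      have e21 : (2:Fin 3) ≠ 1 := by decide
      rcases hd' with (h1 | h2) | h3
      · have := key 0 2 (by norm_num) (by norm_num) h1
        rw [Finsupp.single_apply, Finsupp.single_apply, Finsupp.single_apply] at this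
        simp only [if_pos rfl, if_neg e01, if_neg e02] at this
        push_cast at this
        linarith [this]
      · have := key 1 3 (by norm_num) (by norm_num) h2
        rw [Finsupp.single_apply, Finsupp.single_apply, Finsupp.single_apply] at this
        simp only [if_pos rfl, if_neg e10, if_neg e12] at this
        push_cast at this
        linarith [this]
      · have := key 2 4 (by norm_num) (by norm_num) h3
        rw [Finsupp.single_apply, Finsupp.single_apply, Finsupp.single_apply] at this
        simp only [if_pos rfl, if_neg e20, if_neg e21] at this
        push_cast at this
        linarith [this]

private lemma coeff_lemma (g : ℤ → MvPolynomial (Fin 3) (ZMod 2))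
    (hneg : ∀ r : ℤ, -3 ≤ r → r < 0 → g r = 0)
    (h0 : g 0 = 1)
    (hrec : ∀ r : ℤ, 1 ≤ r →
      g r = X 0 * g (r - 2) + X 1 * g (r - 3) + X 2 * g (r - 4)) :
    ∀ n : ℕ, coeff (Finsupp.single 2 n) (g (4 * n)) = 1 := by
  intro n
  induction n with
  | zero => simp [h0]
  | succ n ih =>
    have h1 : (1 : ℤ) ≤ 4 * (n + 1 : ℕ) := by push_cast; omega
    rw [hrec _ h1]
    have hsing : (Finsupp.single 2 (n + 1) : Fin 3 →₀ ℕ)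
        = Finsupp.single 2 1 + Finsupp.single 2 n := by
      rw [← Finsupp.single_add, Nat.add_comm]
    have hz0 : coeff (Finsupp.single 2 (n + 1 : ℕ))
        (X (R := ZMod 2) 0 * g ((4 * (n + 1 : ℕ) : ℤ) - 2)) = 0 := by
      rw [MvPolynomial.coeff_X_mul']
      simp [Finsupp.single_apply]
    have hz1 : coeff (Finsupp.single 2 (n + 1 : ℕ))
        (X (R := ZMod 2) 1 * g ((4 * (n + 1 : ℕ) : ℤ) - 3)) = 0 := by
      rw [MvPolynomial.coeff_X_mul']
      simp [Finsupp.single_apply]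
    have harg : (4 * (n + 1 : ℕ) : ℤ) - 4 = 4 * (n : ℕ) := by push_cast; ring
    have hz2 : coeff (Finsupp.single 2 (n + 1 : ℕ))
        (X (R := ZMod 2) 2 * g ((4 * (n + 1 : ℕ) : ℤ) - 4)) = 1 := by
      rw [harg, hsing, MvPolynomial.coeff_X_mul]
      exact ih
    rw [coeff_add, coeff_add, hz0, hz1, hz2]
    simp

/-- In `ℤ₂[w₂,w₃,w₄]` (with `X 0 = w₂`, `X 1 = w₃`, `X 2 = w₄`), for every
`t ≥ 2` the leading monomial of `g_{2^t}` with respect to the lexicographic order with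
`w₃ < w₂ < w₄` (compare the `w₄`-exponent first, then `w₂`, then `w₃`) is `w₄^{2^{t-2}}`:
this monomial has coefficient `1` and every exponent vector in the support is
lexicographically `≤` it. -/
theorem stmt_10 (g : ℤ → MvPolynomial (Fin 3) (ZMod 2))
    (hneg : ∀ r : ℤ, -3 ≤ r → r < 0 → g r = 0)
    (h0 : g 0 = 1)
    (hrec : ∀ r : ℤ, 1 ≤ r →
      g r = X 0 * g (r - 2) + X 1 * g (r - 3) + X 2 * g (r - 4)) :
    ∀ t : ℕ, 2 ≤ t →
      coeff (Finsupp.single 2 (2 ^ (t - 2))) (g ((2 : ℤ) ^ t)) = 1 ∧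
      ∀ d ∈ (g ((2 : ℤ) ^ t)).support,
        d 2 < 2 ^ (t - 2) ∨
        (d 2 = 2 ^ (t - 2) ∧ (d 0 < 0 ∨ (d 0 = 0 ∧ d 1 ≤ 0))) := by
  intro t ht
  obtain ⟨s, rfl⟩ : ∃ s, t = s + 2 := ⟨t - 2, by omega⟩
  have hts : s + 2 - 2 = s := by omega
  have harg : (2 : ℤ) ^ (s + 2) = 4 * ((2 ^ s : ℕ) : ℤ) := by push_cast; ring
  constructor
  · rw [hts, harg]
    exact coeff_lemma g hneg h0 hrec (2 ^ s)
  · intro d hd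
    have hp : (0 : ℤ) ≤ 2 ^ (s + 2) := by positivity
    have hw := weight_lemma g hneg h0 hrec ((2 : ℤ) ^ (s + 2) + 3).toNat
      ((2 : ℤ) ^ (s + 2)) (by linarith) (by
        rw [Int.toNat_of_nonneg (by linarith)]) d hd
    rw [harg] at hw
    rw [hts]
    omega
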